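/- arXiv:2512.20262 — 3 statements merged into one kernel-verified Lean document; each statement's English description precedes it below -/
import Mathlib

section
/- Let g = s_0 + s_1 z + ... + s_n z^n ∈ ℤ[z] be a primitive polynomial of degree n with s_0·s_n ≠ 0 such that every complex zero of g lies in the region |z| > 1. Suppose |s_n| = p_1^{k_1}···p_r^{k_r}, where p_1,…,p_r are primes which are pairwise distinct if r ≥ 2 and k_1,…,k_r are positive integers. Suppose that for each i = 1,…,r there exists a positive integer j_i ≤ n such that: (i) v_{p_i}(s_{n−j_i}) = 0 and gcd(k_i, j_i) = 1; (ii) if j_i > 1, then k_i/j_i < v_{p_i}(s_{n−t})/(j_i − t) for each t = 1,…,j_i − 1; and (iii) |s_0|/q ≤ |s_n|, where q is the smallest prime divisor of |s_0|. Then g is a product of at most r irreducible polynomials in ℤ[z]; in particular, if r = 1, then g is irreducible in ℤ[z]. -/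
open Polynomial Finset

private lemma statement6_val_eq {p : ℕ} [Fact p.Prime] {x : ℤ} {e : ℕ}
    (h1 : (p:ℤ)^e ∣ x) (h2 : ¬ (p:ℤ)^(e+1) ∣ x) : x ≠ 0 ∧ padicValInt p x = e := by
  have hx : x ≠ 0 := by rintro rfl; exact h2 (dvd_zero _)
  refine ⟨hx, le_antisymm ?_ ?_⟩
  · by_contra hlt
    exact h2 ((padicValInt_dvd_iff (e+1) x).mpr (Or.inr (by omega)))
  · rcases (padicValInt_dvd_iff e x).mp h1 with h | h
    · exact absurd h hx
    · exact h

private theorem statement6_dumas (p : ℕ) (hp : p.Prime) (k j : ℕ) (hk : 0 < k) (hj0 : 0 < j)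
    (hgcd : Nat.gcd k j = 1) (a b : Polynomial ℤ) (ha : a.leadingCoeff ≠ 0)
    (hb : b.leadingCoeff ≠ 0)
    (H0 : padicValInt p ((a*b).leadingCoeff) = k)
    (Hj : ¬ (p:ℤ) ∣ (a*b).reverse.coeff j)
    (Ht : ∀ t, 0 < t → t < j → (a*b).reverse.coeff t = 0 ∨
        k * (j - t) < j * padicValInt p ((a*b).reverse.coeff t)) :
    padicValInt p a.leadingCoeff = 0 ∨ padicValInt p b.leadingCoeff = 0 := by
  haveI : Fact p.Prime := ⟨hp⟩
  set A := a.reverse with hA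
  set B := b.reverse with hB
  have hABrev : (a*b).reverse = A * B := Polynomial.reverse_mul (by
    exact mul_ne_zero ha hb)
  set α := padicValInt p a.leadingCoeff with hα
  set β := padicValInt p b.leadingCoeff with hβ
  have hA0 : A.coeff 0 = a.leadingCoeff := coeff_zero_reverse a
  have hB0 : B.coeff 0 = b.leadingCoeff := coeff_zero_reverse b
  have hαβ : α + β = k := by
    rw [hα, hβ, ← padicValInt.mul ha hb, ← leadingCoeff_mul, H0]
  -- index sets
  set m := a.natDegree with hm
  set mb := b.natDegree with hmb
  set dA : ℕ → ℕ := fun u => j * padicValInt p (A.coeff u) + k * u with hdA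
  set dB : ℕ → ℕ := fun u => j * padicValInt p (B.coeff u) + k * u with hdB
  set RA := (range (m+1)).filter (fun u => A.coeff u ≠ 0) with hRA
  set RB := (range (mb+1)).filter (fun u => B.coeff u ≠ 0) with hRBdef
  have h0RA : 0 ∈ RA := by
    simp only [hRA, mem_filter, mem_range]
    exact ⟨by omega, by rw [hA0]; exact ha⟩
  have h0RB : 0 ∈ RB := by
    simp only [hRBdef, mem_filter, mem_range]
    exact ⟨by omega, by rw [hB0]; exact hb⟩
  have hRAne : RA.Nonempty := ⟨0, h0RA⟩
  have hRBne : RB.Nonempty := ⟨0, h0RB⟩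
  set DA := RA.inf' hRAne dA with hDA
  set DB := RB.inf' hRBne dB with hDB
  set SA := RA.filter (fun u => dA u = DA) with hSA
  set SB := RB.filter (fun u => dB u = DB) with hSB
  have hSAne : SA.Nonempty := by
    obtain ⟨u, hu, he⟩ := Finset.exists_mem_eq_inf' hRAne dA
    exact ⟨u, by simp [hSA, mem_filter, hu, he.symm]; exact hDA.symm⟩
  have hSBne : SB.Nonempty := by
    obtain ⟨u, hu, he⟩ := Finset.exists_mem_eq_inf' hRBne dB
    exact ⟨u, by simp [hSB, mem_filter, hu, he.symm]; exact hDB.symm⟩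
  -- membership facts
  have memRA : ∀ {u : ℕ}, A.coeff u ≠ 0 → u ∈ RA := by
    intro u hu
    have : u ≤ A.natDegree := le_natDegree_of_ne_zero hu
    have : u ≤ m := le_trans this (a.reverse_natDegree_le)
    simp only [hRA, mem_filter, mem_range]
    exact ⟨by omega, hu⟩
  have memRB : ∀ {u : ℕ}, B.coeff u ≠ 0 → u ∈ RB := by
    intro u hu
    have : u ≤ B.natDegree := le_natDegree_of_ne_zero hu
    have : u ≤ mb := le_trans this (b.reverse_natDegree_le)
    simp only [hRBdef, mem_filter, mem_range]
    exact ⟨by omega, hu⟩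
  have hcoeffRA : ∀ {u : ℕ}, u ∈ RA → A.coeff u ≠ 0 := by
    intro u hu; exact (mem_filter.mp hu).2
  have hcoeffRB : ∀ {u : ℕ}, u ∈ RB → B.coeff u ≠ 0 := by
    intro u hu; exact (mem_filter.mp hu).2
  -- exact valuation at a uniquely-minimizing pair
  have key : ∀ x y, x ∈ SA → y ∈ SB →
      (∀ u v, u + v = x + y → u ∈ SA → v ∈ SB → u = x) →
      (A*B).coeff (x+y) ≠ 0 ∧
        j * padicValInt p ((A*B).coeff (x+y)) + k*(x+y) = DA + DB := by
    intro x y hx hy huniq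
    have hxRA : x ∈ RA := (mem_filter.mp hx).1
    have hyRB : y ∈ RB := (mem_filter.mp hy).1
    have hdAx : dA x = DA := (mem_filter.mp hx).2
    have hdBy : dB y = DB := (mem_filter.mp hy).2
    have hxne : A.coeff x ≠ 0 := hcoeffRA hxRA
    have hyne : B.coeff y ≠ 0 := hcoeffRB hyRB
    set e := padicValInt p (A.coeff x) + padicValInt p (B.coeff y) with he
    have hterm0 : padicValInt p (A.coeff x * B.coeff y) = e :=
      padicValInt.mul hxne hyne
    have hterm0ne : A.coeff x * B.coeff y ≠ 0 := mul_ne_zero hxne hyne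
    have hother : ∀ z ∈ antidiagonal (x+y), z ≠ (x,y) →
        (p:ℤ)^(e+1) ∣ A.coeff z.1 * B.coeff z.2 := by
      rintro ⟨u, v⟩ hz hne
      have huv : u + v = x + y := mem_antidiagonal.mp hz
      by_cases hu0 : A.coeff u = 0
      · simp [hu0]
      by_cases hv0 : B.coeff v = 0
      · simp [hv0]
      have huRA : u ∈ RA := memRA hu0
      have hvRB : v ∈ RB := memRB hv0
      have hgeA : DA ≤ dA u := inf'_le _ huRA
      have hgeB : DB ≤ dB v := inf'_le _ hvRB
      have hstrict : DA + DB + 1 ≤ dA u + dB v := by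
        by_cases huSA : u ∈ SA
        · have hvSB : v ∉ SB := by
            intro hvSB
            have := huniq u v huv huSA hvSB
            subst this
            have : v = y := by omega
            subst this
            exact hne rfl
          have : dB v ≠ DB := fun hc => hvSB (mem_filter.mpr ⟨hvRB, hc⟩)
          omega
        · have : dA u ≠ DA := fun hc => huSA (mem_filter.mpr ⟨huRA, hc⟩)
          omega
      -- translate to valuations
      have hsum : j * (padicValInt p (A.coeff u) + padicValInt p (B.coeff v))
          + k * (u + v)
          = dA u + dB v := by simp only [hdA, hdB]; ring
      rw [huv] at hsum
      have hsum0 : j * e + k * (x + y) = DA + DB := by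
        rw [← hdAx, ← hdBy]; simp only [hdA, hdB, he]; ring
      have hval : e + 1 ≤ padicValInt p (A.coeff u) + padicValInt p (B.coeff v) := by
        by_contra hcon
        push_neg at hcon
        have : padicValInt p (A.coeff u) + padicValInt p (B.coeff v) ≤ e := by omega
        have := Nat.mul_le_mul_left j this
        omega
      calc (p:ℤ)^(e+1) ∣ (p:ℤ)^(padicValInt p (A.coeff u) + padicValInt p (B.coeff v)) :=
            pow_dvd_pow _ hval
        _ ∣ A.coeff u * B.coeff v := by
            rw [pow_add]
            exact mul_dvd_mul (padicValInt_dvd _) (padicValInt_dvd _)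
    have hcm : (A*B).coeff (x+y) = ∑ z ∈ antidiagonal (x+y), A.coeff z.1 * B.coeff z.2 :=
      coeff_mul A B (x+y)
    have hmem0 : ((x,y) : ℕ × ℕ) ∈ antidiagonal (x+y) := mem_antidiagonal.mpr rfl
    have hsplit : (A*B).coeff (x+y)
        = A.coeff x * B.coeff y + ∑ z ∈ (antidiagonal (x+y)).erase (x,y),
            A.coeff z.1 * B.coeff z.2 := by
      rw [hcm]
      exact (Finset.add_sum_erase _ (fun z => A.coeff z.1 * B.coeff z.2) hmem0).symm
    have hrest : (p:ℤ)^(e+1) ∣ ∑ z ∈ (antidiagonal (x+y)).erase (x,y),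
        A.coeff z.1 * B.coeff z.2 := by
      refine Finset.dvd_sum ?_
      intro z hz
      exact hother z (Finset.mem_of_mem_erase hz) (Finset.ne_of_mem_erase hz)
    have hdvd : (p:ℤ)^e ∣ (A*B).coeff (x+y) := by
      rw [hsplit]
      refine dvd_add ?_ (dvd_trans (pow_dvd_pow _ (Nat.le_succ e)) hrest)
      rw [he, pow_add]
      exact mul_dvd_mul (padicValInt_dvd _) (padicValInt_dvd _)
    have hndvd : ¬ (p:ℤ)^(e+1) ∣ (A*B).coeff (x+y) := by
      intro hcon
      have : (p:ℤ)^(e+1) ∣ A.coeff x * B.coeff y := by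
        have := dvd_sub hcon hrest
        rwa [hsplit, add_sub_cancel_right] at this
      rcases (padicValInt_dvd_iff (e+1) _).mp this with h | h
      · exact hterm0ne h
      · rw [hterm0] at h; omega
    obtain ⟨hne0, hval⟩ := statement6_val_eq hdvd hndvd
    refine ⟨hne0, ?_⟩
    rw [hval, ← hdAx, ← hdBy]
    simp only [hdA, hdB, he]; ring
  -- the Newton-polygon lower bound for G = A*B
  have hG0 : (A*B).coeff 0 = (a*b).leadingCoeff := by
    rw [← hABrev]; exact coeff_zero_reverse (a*b)
  have keyG_le : ∀ t, (A*B).coeff t ≠ 0 →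
      j * k ≤ j * padicValInt p ((A*B).coeff t) + k * t := by
    intro t hne
    rcases Nat.eq_zero_or_pos t with rfl | ht0
    · rw [hG0, H0]; omega
    rcases le_or_gt j t with hjt | htj
    · have h2 := Nat.mul_le_mul_left k hjt
      rw [Nat.mul_comm j k]
      omega
    · rcases Ht t ht0 htj with h | h
      · rw [hABrev] at h; exact absurd h hne
      · rw [hABrev] at h
        have h1 : k * (j - t) + k * t = k * j := by
          rw [← Nat.mul_add]; congr 1; omega
        rw [Nat.mul_comm j k]
        omega
  have keyG_lt : ∀ t, t ≠ 0 → t ≠ j → (A*B).coeff t ≠ 0 →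
      j * k < j * padicValInt p ((A*B).coeff t) + k * t := by
    intro t ht0 htj hne
    rcases lt_or_gt_of_ne (show t ≠ j from htj) with h | h
    · rcases Ht t (by omega) h with hz | hlt
      · rw [hABrev] at hz; exact absurd hz hne
      · rw [hABrev] at hlt
        have h1 : k * (j - t) + k * t = k * j := by
          rw [← Nat.mul_add]; congr 1; omega
        rw [Nat.mul_comm j k]
        omega
    · have h2 : k * j < k * t := by
        have := Nat.mul_le_mul_left k (show j + 1 ≤ t by omega)
        have h3 : k * (j+1) = k * j + k := by ring
        omega
      rw [Nat.mul_comm j k]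
      omega
  -- min pair gives DA + DB = j*k, and then 0 ∈ SA, 0 ∈ SB
  obtain ⟨hminne, hminval⟩ := key (SA.min' hSAne) (SB.min' hSBne)
    (SA.min'_mem hSAne) (SB.min'_mem hSBne)
    (fun u v hsum hu hv => by
      have h1 := SA.min'_le u hu
      have h2 := SB.min'_le v hv
      omega)
  have hDAB : DA + DB = j * k := by
    have h1 := keyG_le _ hminne
    have h2 : DA ≤ dA 0 := inf'_le _ h0RA
    have h3 : DB ≤ dB 0 := inf'_le _ h0RB
    have h4 : dA 0 = j * α := by simp [hdA, hA0, hα]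
    have h5 : dB 0 = j * β := by simp [hdB, hB0, hβ]
    have h6 : j * α + j * β = j * k := by rw [← Nat.mul_add, hαβ]
    omega
  have h0SA : 0 ∈ SA := by
    refine mem_filter.mpr ⟨h0RA, ?_⟩
    have h2 : DA ≤ dA 0 := inf'_le _ h0RA
    have h3 : DB ≤ dB 0 := inf'_le _ h0RB
    have h4 : dA 0 = j * α := by simp [hdA, hA0, hα]
    have h5 : dB 0 = j * β := by simp [hdB, hB0, hβ]
    have h6 : j * α + j * β = j * k := by rw [← Nat.mul_add, hαβ]
    omega
  have h0SB : 0 ∈ SB := by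
    refine mem_filter.mpr ⟨h0RB, ?_⟩
    have h2 : DA ≤ dA 0 := inf'_le _ h0RA
    have h3 : DB ≤ dB 0 := inf'_le _ h0RB
    have h4 : dA 0 = j * α := by simp [hdA, hA0, hα]
    have h5 : dB 0 = j * β := by simp [hdB, hB0, hβ]
    have h6 : j * α + j * β = j * k := by rw [← Nat.mul_add, hαβ]
    omega
  -- max pair
  set Ua := SA.max' hSAne with hUa
  set Ub := SB.max' hSBne with hUb
  obtain ⟨hmaxne, hmaxval⟩ := key Ua Ub (SA.max'_mem hSAne) (SB.max'_mem hSBne)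
    (fun u v hsum hu hv => by
      have h1 := SA.le_max' u hu
      have h2 := SB.le_max' v hv
      omega)
  have hT : Ua + Ub = 0 ∨ Ua + Ub = j := by
    by_contra hcon
    push_neg at hcon
    have := keyG_lt (Ua + Ub) hcon.1 hcon.2 hmaxne
    omega
  rcases hT with hT | hT
  · -- Ua = Ub = 0 : contradiction with Hj
    exfalso
    have hUa0 : Ua = 0 := by omega
    have hUb0 : Ub = 0 := by omega
    apply Hj
    rw [hABrev]
    have : (A*B).coeff j = ∑ z ∈ antidiagonal j, A.coeff z.1 * B.coeff z.2 :=
      coeff_mul A B j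
    rw [this]
    refine Finset.dvd_sum ?_
    rintro ⟨u, v⟩ hz
    have huv : u + v = j := mem_antidiagonal.mp hz
    by_cases hu0 : A.coeff u = 0
    · simp [hu0]
    by_cases hv0 : B.coeff v = 0
    · simp [hv0]
    have huRA : u ∈ RA := memRA hu0
    have hvRB : v ∈ RB := memRB hv0
    have hgeA : DA ≤ dA u := inf'_le _ huRA
    have hgeB : DB ≤ dB v := inf'_le _ hvRB
    have hstrict : DA + DB + 1 ≤ dA u + dB v := by
      rcases Nat.eq_zero_or_pos u with rfl | hup
      · have hvpos : 0 < v := by omega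
        have hvSB : v ∉ SB := fun hc => by have := SB.le_max' v hc; omega
        have : dB v ≠ DB := fun hc => hvSB (mem_filter.mpr ⟨hvRB, hc⟩)
        omega
      · have huSA : u ∉ SA := fun hc => by have := SA.le_max' u hc; omega
        have : dA u ≠ DA := fun hc => huSA (mem_filter.mpr ⟨huRA, hc⟩)
        omega
    have hsum : j * (padicValInt p (A.coeff u) + padicValInt p (B.coeff v))
        + k * j = dA u + dB v := by
      simp only [hdA, hdB]
      rw [← huv]; ring
    have hval : 1 ≤ padicValInt p (A.coeff u) + padicValInt p (B.coeff v) := by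
      by_contra hcon
      push_neg at hcon
      have hz : padicValInt p (A.coeff u) + padicValInt p (B.coeff v) = 0 := by omega
      rw [hz, Nat.mul_zero] at hsum
      rw [Nat.mul_comm k j] at hsum
      omega
    calc (p:ℤ) ∣ (p:ℤ)^(padicValInt p (A.coeff u) + padicValInt p (B.coeff v)) := by
          refine dvd_trans (dvd_pow_self (p:ℤ) ?_) (pow_dvd_pow _ hval)
          omega
      _ ∣ A.coeff u * B.coeff v := by
          rw [pow_add]
          exact mul_dvd_mul (padicValInt_dvd _) (padicValInt_dvd _)
  · -- Ua + Ub = j : the main case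
    have hdA0 : dA 0 = j * α := by simp [hdA, hA0, hα]
    have hdB0 : dB 0 = j * β := by simp [hdB, hB0, hβ]
    have hDAeq : DA = j * α := by rw [← hdA0]; exact ((mem_filter.mp h0SA).2).symm
    have hDBeq : DB = j * β := by rw [← hdB0]; exact ((mem_filter.mp h0SB).2).symm
    have hdAUa : j * padicValInt p (A.coeff Ua) + k * Ua = j * α := by
      have := (mem_filter.mp (SA.max'_mem hSAne)).2
      rw [hDAeq] at this
      simpa [hdA] using this
    have hdBUb : j * padicValInt p (B.coeff Ub) + k * Ub = j * β := by
      have := (mem_filter.mp (SB.max'_mem hSBne)).2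
      rw [hDBeq] at this
      simpa [hdB] using this
    have hjdvd : j ∣ k * Ua := by
      have : k * Ua = j * α - j * padicValInt p (A.coeff Ua) := by omega
      rw [this, ← Nat.mul_sub]
      exact Dvd.intro _ rfl
    have hjUa : j ∣ Ua := (Nat.Coprime.dvd_of_dvd_mul_left
      (Nat.coprime_comm.mp hgcd) hjdvd)
    have hUacase : Ua = 0 ∨ Ua = j := by
      rcases Nat.eq_zero_or_pos Ua with h | h
      · exact Or.inl h
      · right
        have := Nat.le_of_dvd h hjUa
        omega
    rcases hUacase with hcase | hcase
    · -- Ub = j, so β ≥ k, α = 0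
      left
      have hUbj : Ub = j := by omega
      rw [hUbj] at hdBUb
      have : j * (padicValInt p (B.coeff j) + k) = j * β := by
        rw [Nat.mul_add, Nat.mul_comm j k] at *
        omega
      have hβk : padicValInt p (B.coeff j) + k = β := Nat.eq_of_mul_eq_mul_left hj0 this
      omega
    · -- Ua = j, so α ≥ k, β = 0
      right
      rw [hcase] at hdAUa
      have : j * (padicValInt p (A.coeff j) + k) = j * α := by
        rw [Nat.mul_add, Nat.mul_comm j k] at *
        omega
      have hαk : padicValInt p (A.coeff j) + k = α := Nat.eq_of_mul_eq_mul_left hj0 this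
      omega

private lemma statement6_root_bound (h : Polynomial ℤ) (hne : h ≠ 0) (hd : 0 < h.natDegree)
    (hroots : ∀ z : ℂ, Polynomial.aeval z h = 0 → 1 < ‖z‖) :
    h.leadingCoeff.natAbs + 1 ≤ (h.coeff 0).natAbs := by
  set H := h.map (Int.castRingHom ℂ) with hH
  have hinj : Function.Injective (Int.castRingHom ℂ) := fun x y hxy => by
    simpa using hxy
  have hHne : H ≠ 0 := (Polynomial.map_ne_zero_iff hinj).mpr hne
  have hHdeg : H.natDegree = h.natDegree := natDegree_map_eq_of_injective hinj h
  have hsplits : H.Splits := IsAlgClosed.splits H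
  have hcard : H.roots.card = H.natDegree := (splits_iff_card_roots).mp hsplits
  have hprod : H = C H.leadingCoeff * (H.roots.map (fun a => X - C a)).prod :=
    hsplits.eq_prod_roots
  have hroot_abs : ∀ z ∈ H.roots, 1 < ‖z‖ := by
    intro z hz
    have : H.eval z = 0 := (Polynomial.mem_roots hHne).mp hz
    apply hroots z
    rwa [Polynomial.aeval_def, ← Polynomial.eval_map]
  -- evaluate at 0
  have heval : H.eval 0 = H.leadingCoeff * (H.roots.map (fun a => -a)).prod := by
    conv_lhs => rw [hprod]
    rw [Polynomial.eval_mul, Polynomial.eval_C, Polynomial.eval_multiset_prod]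
    congr 2
    rw [Multiset.map_map]
    congr 1
    funext a
    simp
  have habs : ‖H.eval 0‖
      = ‖H.leadingCoeff‖ * (H.roots.map (fun a => ‖a‖)).prod := by
    rw [heval, norm_mul]
    congr 1
    rw [show ‖(H.roots.map (fun a => -a)).prod‖ = ((H.roots.map (fun a => -a)).map (normHom : ℂ →*₀ ℝ)).prod from
      map_multiset_prod (normHom : ℂ →*₀ ℝ) _, Multiset.map_map]
    exact congrArg Multiset.prod (Multiset.map_congr rfl (fun a _ => norm_neg a))
  have hPgt : 1 < (H.roots.map (fun a => ‖a‖)).prod := by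
    have hcard' : 0 < H.roots.card := by rw [hcard, hHdeg]; exact hd
    obtain ⟨z, hz⟩ := Multiset.card_pos_iff_exists_mem.mp hcard'
    obtain ⟨s, hs⟩ := Multiset.exists_cons_of_mem hz
    rw [hs, Multiset.map_cons, Multiset.prod_cons]
    have h1 : 1 ≤ (s.map (fun a => ‖a‖)).prod := by
      apply Multiset.one_le_prod
      intro x hx
      obtain ⟨a, ha, rfl⟩ := Multiset.mem_map.mp hx
      refine le_of_lt (hroot_abs a ?_)
      rw [hs]
      exact Multiset.mem_cons_of_mem ha
    have h2 : 1 < ‖z‖ := hroot_abs z hz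
    nlinarith [norm_nonneg z]
  have hlead : H.leadingCoeff = (h.leadingCoeff : ℂ) := leadingCoeff_map_of_injective hinj h
  have hev0 : H.eval 0 = (h.coeff 0 : ℂ) := by
    rw [← Polynomial.coeff_zero_eq_eval_zero, hH, Polynomial.coeff_map]
    rfl
  have hlead_ne : h.leadingCoeff ≠ 0 := Polynomial.leadingCoeff_ne_zero.mpr hne
  have hlead_pos : (0:ℝ) < ‖H.leadingCoeff‖ := by
    rw [hlead]
    simp only [Complex.norm_intCast]
    rw [abs_pos]
    exact_mod_cast hlead_ne
  have hfinal : ‖H.leadingCoeff‖ < ‖H.eval 0‖ := by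
    rw [habs]
    nlinarith
  have : (h.leadingCoeff.natAbs : ℝ) < ((h.coeff 0).natAbs : ℝ) := by
    have e1 : ‖H.leadingCoeff‖ = (h.leadingCoeff.natAbs : ℝ) := by
      rw [hlead, Complex.norm_intCast]
      simp [Nat.cast_natAbs]
    have e2 : ‖H.eval 0‖ = ((h.coeff 0).natAbs : ℝ) := by
      rw [hev0, Complex.norm_intCast]
      simp [Nat.cast_natAbs]
    rwa [e1, e2] at hfinal
  have := Nat.cast_lt (α := ℝ) |>.mp this
  omega

private lemma statement6_natAbs_prod (s : Multiset ℤ) :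
    s.prod.natAbs = (s.map Int.natAbs).prod := by
  induction s using Multiset.induction_on with
  | empty => simp
  | cons x s ih => simp [Int.natAbs_mul, ih]

private lemma statement6_count {α : Type*} (r : ℕ) (Q : ℕ → α → Prop)
    [∀ i x, Decidable (Q i x)] (s : Multiset α)
    (hall : ∀ x ∈ s, ∃ i, i < r ∧ Q i x) :
    Multiset.card s ≤ ∑ i ∈ Finset.range r, Multiset.countP (Q i) s := by
  induction s using Multiset.induction_on with
  | empty => simp
  | cons x s ih =>
    obtain ⟨i0, hi0, hQ⟩ := hall x (Multiset.mem_cons_self x s)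
    have hs := ih (fun y hy => hall y (Multiset.mem_cons_of_mem hy))
    rw [Multiset.card_cons]
    have hsum : ∑ i ∈ Finset.range r, Multiset.countP (Q i) (x ::ₘ s)
        = ∑ i ∈ Finset.range r,
          (Multiset.countP (Q i) s + if Q i x then 1 else 0) :=
      Finset.sum_congr rfl (fun i _ => Multiset.countP_cons (Q i) x s)
    rw [hsum, Finset.sum_add_distrib]
    have h1 : 1 ≤ ∑ i ∈ Finset.range r, (if Q i x then 1 else 0) := by
      calc (1:ℕ) = if Q i0 x then 1 else 0 := (if_pos hQ).symm
        _ ≤ ∑ i ∈ Finset.range r, (if Q i x then 1 else 0) :=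
          Finset.single_le_sum (f := fun i => if Q i x then (1:ℕ) else 0)
            (fun _ _ => Nat.zero_le _) (Finset.mem_range.mpr hi0)
    omega

private lemma statement6_two_le {α : Type*} (s : Multiset α) (P : α → Prop)
    [DecidablePred P] (h2 : 2 ≤ Multiset.countP P s) :
    ∃ x y t, s = x ::ₘ y ::ₘ t ∧ P x ∧ P y := by
  have h1 : 0 < Multiset.countP P s := by omega
  obtain ⟨x, hxs, hPx⟩ := (Multiset.countP_pos).mp h1
  obtain ⟨t1, ht1⟩ := Multiset.exists_cons_of_mem hxs
  have hc : Multiset.countP P t1 + 1 = Multiset.countP P s := by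
    rw [ht1, Multiset.countP_cons, if_pos hPx]
  have h3 : 0 < Multiset.countP P t1 := by omega
  obtain ⟨y, hys, hPy⟩ := (Multiset.countP_pos).mp h3
  obtain ⟨t2, ht2⟩ := Multiset.exists_cons_of_mem hys
  exact ⟨x, y, t2, by rw [ht1, ht2], hPx, hPy⟩

private lemma statement6_padic_prod (r : ℕ) (p k : ℕ → ℕ)
    (hp : ∀ i < r, Nat.Prime (p i))
    (hpdist : ∀ i < r, ∀ i' < r, i ≠ i' → p i ≠ p i')
    (i : ℕ) (hi : i < r) :
    padicValNat (p i) (∏ i' ∈ Finset.range r, p i' ^ k i') = k i := by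
  have hne : ∀ i' ∈ Finset.range r, p i' ^ k i' ≠ 0 := by
    intro i' hi'
    exact pow_ne_zero _ (hp i' (Finset.mem_range.mp hi')).pos.ne'
  have hfact := Nat.factorization_prod hne
  have happ := congrFun (congrArg (fun f => f.toFun) hfact) (p i)
  have h1 : (∏ i' ∈ Finset.range r, p i' ^ k i').factorization (p i)
      = ∑ i' ∈ Finset.range r, (p i' ^ k i').factorization (p i) := by
    rw [hfact]
    exact Finset.sum_apply' (p i)
  have h2 : ∀ i' ∈ Finset.range r, i' ≠ i →
      (p i' ^ k i').factorization (p i) = 0 := by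
    intro i' hi' hne'
    rw [(hp i' (Finset.mem_range.mp hi')).factorization_pow]
    rw [Finsupp.single_apply]
    rw [if_neg (hpdist i' (Finset.mem_range.mp hi') i hi hne')]
  have h3 : (p i ^ k i).factorization (p i) = k i := by
    rw [(hp i hi).factorization_pow, Finsupp.single_apply, if_pos rfl]
  have h4 : (∏ i' ∈ Finset.range r, p i' ^ k i').factorization (p i) = k i := by
    rw [h1, Finset.sum_eq_single i h2 (fun hc => absurd (Finset.mem_range.mpr hi) hc)]
    exact h3
  rw [← Nat.factorization_def _ (hp i hi)]
  exact h4

/-- Lemma 4: let `g = s_0 + s_1 z + ⋯ + s_n z^n ∈ ℤ[z]` be primitive of degree `n`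
with `s_0 s_n ≠ 0`, all of whose complex zeros lie in the region `|z| > 1`. Suppose
`|s_n| = p_1^{k_1} ⋯ p_r^{k_r}` for pairwise distinct primes `p_i`, and for each `i`
there is `1 ≤ j_i ≤ n` with (i) `v_{p_i}(s_{n-j_i}) = 0` and `gcd(k_i, j_i) = 1`;
(ii) if `j_i > 1`, `k_i/j_i < v_{p_i}(s_{n-t})/(j_i - t)` for `t = 1, …, j_i - 1`
(with `v_p(0) = ∞`); and (iii) `|s_0|/q ≤ |s_n|` where `q` is the smallest prime
divisor of `|s_0|`. Then `g` is a product of at most `r` irreducible polynomials in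
`ℤ[z]`; in particular if `r = 1` then `g` is irreducible. -/
theorem statement6
    (g : Polynomial ℤ) (n : ℕ) (hdeg : g.natDegree = n)
    (hs : g.coeff 0 * g.coeff n ≠ 0) (hprim : g.IsPrimitive)
    (hzeros : ∀ z : ℂ, Polynomial.aeval z g = 0 → 1 < ‖z‖)
    (r : ℕ) (hr : 0 < r)
    (p k j : ℕ → ℕ)
    (hp : ∀ i < r, Nat.Prime (p i))
    (hk : ∀ i < r, 0 < k i)
    (hpdist : ∀ i < r, ∀ i' < r, i ≠ i' → p i ≠ p i')
    (hsn : (g.coeff n).natAbs = ∏ i ∈ Finset.range r, p i ^ k i)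
    (hj : ∀ i < r, 0 < j i ∧ j i ≤ n)
    (hcond1 : ∀ i < r,
      ¬ ((p i : ℤ) ∣ g.coeff (n - j i)) ∧ Nat.gcd (k i) (j i) = 1)
    (hcond2 : ∀ i < r, 1 < j i → ∀ t, 1 ≤ t → t ≤ j i - 1 →
      g.coeff (n - t) = 0 ∨
      (k i : ℚ) / (j i : ℚ) <
        (padicValInt (p i) (g.coeff (n - t)) : ℚ) / ((j i : ℚ) - (t : ℚ)))
    (q : ℕ) (hq : Nat.Prime q) (hqdvd : q ∣ (g.coeff 0).natAbs)
    (hqmin : ∀ q', Nat.Prime q' → q' ∣ (g.coeff 0).natAbs → q ≤ q')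
    (hcond3 : ((g.coeff 0).natAbs : ℚ) / (q : ℚ) ≤ ((g.coeff n).natAbs : ℚ)) :
    (∃ (N : ℕ) (u : ℤˣ) (gs : Multiset (Polynomial ℤ)),
      N ≤ r ∧ Multiset.card gs = N ∧
      (∀ h ∈ gs, 0 < h.natDegree ∧ Irreducible h) ∧
      g = Polynomial.C (u : ℤ) * gs.prod) ∧
    (r = 1 → Irreducible g) := by
  have hg0 : g.coeff 0 ≠ 0 := left_ne_zero_of_mul hs
  have hgn : g.coeff n ≠ 0 := right_ne_zero_of_mul hs
  have hgne : g ≠ 0 := fun hc => hg0 (by simp [hc])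
  have hn1 : 1 ≤ n := le_trans (hj 0 hr).1 (hj 0 hr).2
  have hlead : g.leadingCoeff = g.coeff n := by rw [Polynomial.leadingCoeff, hdeg]
  have hleadne : g.leadingCoeff ≠ 0 := by rw [hlead]; exact hgn
  -- factorization into irreducibles
  set gs := UniqueFactorizationMonoid.factors g with hgs
  obtain ⟨u0, hu0⟩ := UniqueFactorizationMonoid.factors_prod hgne
  obtain ⟨w0, hw0unit, hw0⟩ := Polynomial.isUnit_iff.mp u0.isUnit
  set w : ℤˣ := hw0unit.unit with hwdef
  have hwval : (w : ℤ) = w0 := rfl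
  have hgfact : g = Polynomial.C (w : ℤ) * gs.prod := by
    rw [hwval, ← hu0, ← hw0]; ring
  have hmemIrr : ∀ h ∈ gs, Irreducible h := fun h hh =>
    UniqueFactorizationMonoid.irreducible_of_factor h hh
  have hmemne : ∀ h ∈ gs, h ≠ 0 := fun h hh => (hmemIrr h hh).ne_zero
  have hmemdvd : ∀ h ∈ gs, h ∣ g := by
    intro h hh
    refine dvd_trans (Multiset.dvd_prod hh) ⟨Polynomial.C (w : ℤ), ?_⟩
    rw [hgfact]; ring
  have hmemlead : ∀ h ∈ gs, h.leadingCoeff ≠ 0 := fun h hh =>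
    Polynomial.leadingCoeff_ne_zero.mpr (hmemne h hh)
  have hmemdeg : ∀ h ∈ gs, 0 < h.natDegree := by
    intro h hh
    by_contra hc
    push_neg at hc
    have h0 : h.natDegree = 0 := by omega
    have := Polynomial.eq_C_of_natDegree_eq_zero h0
    have hCdvd : Polynomial.C (h.coeff 0) ∣ g := this ▸ hmemdvd h hh
    have hdvd : ∀ i, h.coeff 0 ∣ g.coeff i := (Polynomial.C_dvd_iff_dvd_coeff _ _).mp hCdvd
    have hunit : IsUnit (h.coeff 0) := hprim _ hCdvd
    exact (hmemIrr h hh).not_isUnit (this ▸ (Polynomial.isUnit_C.mpr hunit))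
  -- roots of factors
  have hmemroots : ∀ h ∈ gs, ∀ z : ℂ, Polynomial.aeval z h = 0 → 1 < ‖z‖ := by
    intro h hh z hz
    obtain ⟨h', hh'⟩ := hmemdvd h hh
    apply hzeros z
    rw [hh', map_mul, hz, zero_mul]
  have hbound1 : ∀ h ∈ gs, h.leadingCoeff.natAbs + 1 ≤ (h.coeff 0).natAbs := by
    intro h hh
    exact statement6_root_bound h (hmemne h hh) (hmemdeg h hh) (hmemroots h hh)
  have hmeml1 : ∀ h ∈ gs, 1 ≤ h.leadingCoeff.natAbs := fun h hh =>
    Nat.one_le_iff_ne_zero.mpr (Int.natAbs_ne_zero.mpr (hmemlead h hh))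
  have hwabs : (w : ℤ).natAbs = 1 := Int.isUnit_iff_natAbs_eq.mp w.isUnit
  -- product identities
  have hlead_prod : g.coeff n = (w : ℤ) * (gs.map Polynomial.leadingCoeff).prod := by
    rw [← hlead]
    conv_lhs => rw [hgfact]
    rw [Polynomial.leadingCoeff_mul, Polynomial.leadingCoeff_C,
      Polynomial.leadingCoeff_multiset_prod]
  have hc0_prod : g.coeff 0 = (w : ℤ) * (gs.map (fun h => h.coeff 0)).prod := by
    conv_lhs => rw [hgfact]
    rw [Polynomial.coeff_zero_eq_eval_zero, Polynomial.eval_mul, Polynomial.eval_C,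
      Polynomial.eval_multiset_prod]
    congr 1
    exact congrArg Multiset.prod (Multiset.map_congr rfl
      (fun h _ => (Polynomial.coeff_zero_eq_eval_zero h).symm))
  have hLprod : (g.coeff n).natAbs = (gs.map (fun h => h.leadingCoeff.natAbs)).prod := by
    rw [hlead_prod, Int.natAbs_mul, hwabs, one_mul, statement6_natAbs_prod,
      Multiset.map_map]
    rfl
  have hP0prod : (g.coeff 0).natAbs = (gs.map (fun h => (h.coeff 0).natAbs)).prod := by
    rw [hc0_prod, Int.natAbs_mul, hwabs, one_mul, statement6_natAbs_prod,
      Multiset.map_map]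
    rfl
  -- q ≤ |h(0)| for each factor
  have hboundq : ∀ h ∈ gs, q ≤ (h.coeff 0).natAbs := by
    intro h hh
    have h2 : 2 ≤ (h.coeff 0).natAbs := by
      have := hbound1 h hh
      have := hmeml1 h hh
      omega
    obtain ⟨q', hq', hq'dvd⟩ := Nat.exists_prime_and_dvd (show (h.coeff 0).natAbs ≠ 1 by omega)
    have hdvd0 : (h.coeff 0).natAbs ∣ (g.coeff 0).natAbs := by
      apply Int.natAbs_dvd_natAbs.mpr
      rw [hc0_prod]
      refine Dvd.dvd.mul_left ?_ _
      exact Multiset.dvd_prod (Multiset.mem_map_of_mem _ hh)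
    have := hqmin q' hq' (dvd_trans hq'dvd hdvd0)
    exact le_trans this (Nat.le_of_dvd (by omega) hq'dvd)
  -- Dumas for any two-factor splitting of g
  have hdumas : ∀ i < r, ∀ (a b : Polynomial ℤ), g = a * b →
      a.leadingCoeff ≠ 0 → b.leadingCoeff ≠ 0 →
      padicValInt (p i) a.leadingCoeff = 0 ∨ padicValInt (p i) b.leadingCoeff = 0 := by
    intro i hi a b hab hla hlb
    apply statement6_dumas (p i) (hp i hi) (k i) (j i) (hk i hi) (hj i hi).1
      (hcond1 i hi).2 a b hla hlb
    · -- H0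
      rw [← hab, hlead]
      show padicValNat (p i) (g.coeff n).natAbs = k i
      rw [hsn]
      exact statement6_padic_prod r p k hp hpdist i hi
    · -- Hj
      rw [← hab]
      have hrev : g.reverse.coeff (j i) = g.coeff (n - j i) := by
        rw [Polynomial.coeff_reverse, hdeg, Polynomial.revAt_le (hj i hi).2]
      rw [hrev]
      exact (hcond1 i hi).1
    · -- Ht
      intro t ht0 htj
      rw [← hab]
      have hji : 1 < j i := by omega
      have hrevt : g.reverse.coeff t = g.coeff (n - t) := by
        rw [Polynomial.coeff_reverse, hdeg, Polynomial.revAt_le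
          (le_trans (le_of_lt htj) (hj i hi).2)]
      rcases hcond2 i hi hji t ht0 (by omega) with hz | hlt
      · left; rw [hrevt]; exact hz
      · right
        rw [hrevt]
        have hJQ : (0:ℚ) < (j i : ℚ) := by exact_mod_cast (hj i hi).1
        have htQ : (t:ℚ) < (j i : ℚ) := by exact_mod_cast htj
        have hJtQ : (0:ℚ) < (j i : ℚ) - t := by linarith
        have h2 := (div_lt_div_iff₀ hJQ hJtQ).mp hlt
        rw [mul_comm] at h2
        have h3 : ((k i * (j i - t) : ℕ) : ℚ)
            < ((j i * padicValInt (p i) (g.coeff (n - t)) : ℕ) : ℚ) := by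
          push_cast [Nat.cast_sub (le_of_lt htj)]
          linarith
        exact_mod_cast h3
  -- at most one factor has leading coefficient divisible by p i
  have hcount1 : ∀ i < r,
      Multiset.countP (fun h => (p i : ℤ) ∣ h.leadingCoeff) gs ≤ 1 := by
    intro i hi
    haveI : Fact (p i).Prime := ⟨hp i hi⟩
    by_contra hc
    push_neg at hc
    obtain ⟨x, y, t, hxyt, hPx, hPy⟩ := statement6_two_le gs _ hc
    have hxmem : x ∈ gs := by rw [hxyt]; exact Multiset.mem_cons_self _ _
    have hymem : y ∈ gs := by
      rw [hxyt]; exact Multiset.mem_cons_of_mem (Multiset.mem_cons_self _ _)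
    have htmem : ∀ z ∈ t, z ∈ gs := by
      intro z hz
      rw [hxyt]
      exact Multiset.mem_cons_of_mem (Multiset.mem_cons_of_mem hz)
    have htprodne : t.prod ≠ 0 := by
      apply Multiset.prod_ne_zero
      intro hc0
      exact hmemne 0 (htmem 0 hc0) rfl
    set b := Polynomial.C (w : ℤ) * (y * t.prod) with hbdef
    have hbne : b ≠ 0 := by
      apply mul_ne_zero
      · simpa using w.ne_zero
      · exact mul_ne_zero (hmemne y hymem) htprodne
    have hgeq : g = x * b := by
      rw [hgfact, hxyt, Multiset.prod_cons, Multiset.prod_cons, hbdef]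
      ring
    have hlbx : x.leadingCoeff ≠ 0 := hmemlead x hxmem
    have hlbb : b.leadingCoeff ≠ 0 := Polynomial.leadingCoeff_ne_zero.mpr hbne
    have hpx : 1 ≤ padicValInt (p i) x.leadingCoeff := by
      rcases (padicValInt_dvd_iff (p := p i) 1 x.leadingCoeff).mp (by simpa using hPx)
        with h | h
      · exact absurd h hlbx
      · exact h
    have hpb : 1 ≤ padicValInt (p i) b.leadingCoeff := by
      have hdvdb : (p i : ℤ) ∣ b.leadingCoeff := by
        rw [hbdef, Polynomial.leadingCoeff_mul, Polynomial.leadingCoeff_mul]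
        exact Dvd.dvd.mul_left (Dvd.dvd.mul_right hPy _) _
      rcases (padicValInt_dvd_iff (p := p i) 1 b.leadingCoeff).mp (by simpa using hdvdb)
        with h | h
      · exact absurd h hlbb
      · exact h
    rcases hdumas i hi x b hgeq hlbx hlbb with h | h <;> omega
  classical
  set Pbig : Polynomial ℤ → Prop := fun h => 1 < h.leadingCoeff.natAbs with hPbig
  set S := gs.filter Pbig with hSdef
  set T := gs.filter (fun h => ¬ Pbig h) with hTdef
  have hST : S + T = gs := Multiset.filter_add_not _ _
  have hSsub : ∀ h ∈ S, h ∈ gs := fun h hh => Multiset.mem_of_mem_filter hh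
  have hTsub : ∀ h ∈ T, h ∈ gs := fun h hh => Multiset.mem_of_mem_filter hh
  have hcardS : Multiset.card S ≤ r := by
    have hall : ∀ x ∈ S, ∃ i, i < r ∧ (p i : ℤ) ∣ x.leadingCoeff := by
      intro x hx
      have hx1 : 1 < x.leadingCoeff.natAbs := (Multiset.mem_filter.mp hx).2
      have hxg : x ∈ gs := hSsub x hx
      obtain ⟨q', hq', hq'dvd⟩ := Nat.exists_prime_and_dvd
        (show x.leadingCoeff.natAbs ≠ 1 by omega)
      have hdvdL : x.leadingCoeff.natAbs ∣ (g.coeff n).natAbs := by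
        apply Int.natAbs_dvd_natAbs.mpr
        rw [hlead_prod]
        exact Dvd.dvd.mul_left
          (Multiset.dvd_prod (Multiset.mem_map_of_mem _ hxg)) _
      have hq'P : q' ∣ ∏ i ∈ Finset.range r, p i ^ k i := by
        rw [← hsn]; exact dvd_trans hq'dvd hdvdL
      obtain ⟨i, hi, hq'pi⟩ := Prime.exists_mem_finset_dvd hq'.prime hq'P
      have hqpi : q' = p i := by
        have := hq'.dvd_of_dvd_pow hq'pi
        exact (Nat.prime_dvd_prime_iff_eq hq' (hp i (Finset.mem_range.mp hi))).mp this
      refine ⟨i, Finset.mem_range.mp hi, ?_⟩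
      rw [← hqpi]
      exact Int.natCast_dvd.mpr hq'dvd
    calc Multiset.card S
        ≤ ∑ i ∈ Finset.range r,
            Multiset.countP (fun h => (p i:ℤ) ∣ h.leadingCoeff) S :=
          statement6_count r _ S hall
      _ ≤ ∑ i ∈ Finset.range r,
            Multiset.countP (fun h => (p i:ℤ) ∣ h.leadingCoeff) gs :=
          Finset.sum_le_sum (fun i _ =>
            Multiset.countP_le_of_le _ (Multiset.filter_le _ _))
      _ ≤ ∑ _i ∈ Finset.range r, 1 :=
          Finset.sum_le_sum (fun i hi => hcount1 i (Finset.mem_range.mp hi))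
      _ = r := by simp
  have hL2 : 2 ≤ (g.coeff n).natAbs := by
    have hpos : 0 < (g.coeff n).natAbs := Int.natAbs_pos.mpr hgn
    have hdvd : p 0 ^ k 0 ∣ (g.coeff n).natAbs := by
      rw [hsn]; exact Finset.dvd_prod_of_mem _ (Finset.mem_range.mpr hr)
    have h2 : 2 ≤ p 0 ^ k 0 := by
      calc 2 ≤ p 0 := (hp 0 hr).two_le
        _ ≤ p 0 ^ k 0 := Nat.le_self_pow (by have := hk 0 hr; omega) _
    exact le_trans h2 (Nat.le_of_dvd hpos hdvd)
  have hTl1 : ∀ h ∈ T, h.leadingCoeff.natAbs = 1 := by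
    intro h hh
    have h1 := (Multiset.mem_filter.mp hh).2
    have h2 := hmeml1 h (hTsub h hh)
    simp only [hPbig] at h1
    omega
  have hSl : (S.map (fun h => h.leadingCoeff.natAbs)).prod = (g.coeff n).natAbs := by
    rw [hLprod, ← hST, Multiset.map_add, Multiset.prod_add]
    have hT1 : (T.map (fun h => h.leadingCoeff.natAbs)).prod = 1 :=
      Multiset.prod_eq_one (by
        intro x hx
        obtain ⟨h, hh, rfl⟩ := Multiset.mem_map.mp hx
        exact hTl1 h hh)
    rw [hT1, mul_one]
  have hTempty : T = 0 := by
    by_contra hTne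
    have hSne : S ≠ 0 := by
      intro hS0
      rw [hS0] at hSl
      simp at hSl
      omega
    obtain ⟨x, hxS⟩ := Multiset.exists_mem_of_ne_zero hSne
    obtain ⟨S', hS'⟩ := Multiset.exists_cons_of_mem hxS
    have hprodS : (g.coeff n).natAbs + 1 ≤ (S.map (fun h => (h.coeff 0).natAbs)).prod := by
      rw [← hSl, hS', Multiset.map_cons, Multiset.prod_cons,
        Multiset.map_cons, Multiset.prod_cons]
      have hS'sub : ∀ h ∈ S', h ∈ gs := by
        intro h hh
        exact hSsub h (by rw [hS']; exact Multiset.mem_cons_of_mem hh)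
      have hx1 : x.leadingCoeff.natAbs + 1 ≤ (x.coeff 0).natAbs :=
        hbound1 x (hSsub x hxS)
      have hmono : (S'.map (fun h => h.leadingCoeff.natAbs)).prod
          ≤ (S'.map (fun h => (h.coeff 0).natAbs)).prod := by
        apply Multiset.prod_map_le_prod_map₀
        · intro i _; exact Nat.zero_le _
        · intro i hi
          have := hbound1 i (hS'sub i hi)
          omega
      have h1 : 1 ≤ (S'.map (fun h => h.leadingCoeff.natAbs)).prod := by
        apply Multiset.one_le_prod
        intro y hy
        obtain ⟨h, hh, rfl⟩ := Multiset.mem_map.mp hy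
        exact hmeml1 h (hS'sub h hh)
      set a := x.leadingCoeff.natAbs
      set c := (x.coeff 0).natAbs
      set A := (S'.map (fun h => h.leadingCoeff.natAbs)).prod
      set C := (S'.map (fun h => (h.coeff 0).natAbs)).prod
      calc a * A + 1 ≤ a * A + A := by omega
        _ = (a + 1) * A := by ring
        _ ≤ c * A := Nat.mul_le_mul_right A hx1
        _ ≤ c * C := Nat.mul_le_mul_left c hmono
    have hprodT : q ≤ (T.map (fun h => (h.coeff 0).natAbs)).prod := by
      obtain ⟨y, hyT⟩ := Multiset.exists_mem_of_ne_zero hTne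
      obtain ⟨T', hT'⟩ := Multiset.exists_cons_of_mem hyT
      rw [hT', Multiset.map_cons, Multiset.prod_cons]
      have hy : q ≤ (y.coeff 0).natAbs := hboundq y (hTsub y hyT)
      have h1 : 1 ≤ (T'.map (fun h => (h.coeff 0).natAbs)).prod := by
        apply Multiset.one_le_prod
        intro z hz
        obtain ⟨h, hh, rfl⟩ := Multiset.mem_map.mp hz
        have hhg : h ∈ gs := hTsub h (by rw [hT']; exact Multiset.mem_cons_of_mem hh)
        have := hboundq h hhg
        have := hq.two_le
        omega
      calc q ≤ (y.coeff 0).natAbs * 1 := by omega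
        _ ≤ (y.coeff 0).natAbs * (T'.map (fun h => (h.coeff 0).natAbs)).prod :=
          Nat.mul_le_mul_left _ h1
    have hbig : ((g.coeff n).natAbs + 1) * q ≤ (g.coeff 0).natAbs := by
      rw [hP0prod, ← hST, Multiset.map_add, Multiset.prod_add]
      exact Nat.mul_le_mul hprodS hprodT
    have hc3 : (g.coeff 0).natAbs ≤ q * (g.coeff n).natAbs := by
      have hq0 : (0:ℚ) < (q:ℚ) := by exact_mod_cast hq.pos
      have h1 := (div_le_iff₀ hq0).mp hcond3
      have h2 : ((g.coeff 0).natAbs : ℚ) ≤ ((q * (g.coeff n).natAbs : ℕ) : ℚ) := by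
        push_cast
        linarith
      exact_mod_cast h2
    have hqpos : 0 < q := hq.pos
    have hexp : ((g.coeff n).natAbs + 1) * q = (g.coeff n).natAbs * q + q := by ring
    have hcomm : q * (g.coeff n).natAbs = (g.coeff n).natAbs * q := by ring
    omega
  have hcard : Multiset.card gs ≤ r := by
    have hc := congrArg Multiset.card hST
    rw [Multiset.card_add, hTempty] at hc
    simp at hc
    omega
  refine ⟨⟨Multiset.card gs, w, gs, hcard, rfl,
    fun h hh => ⟨hmemdeg h hh, hmemIrr h hh⟩, hgfact⟩, ?_⟩
  intro hr1
  subst hr1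
  rcases Nat.lt_or_ge (Multiset.card gs) 1 with h0 | h1
  · exfalso
    have hgs0 : gs = 0 := Multiset.card_eq_zero.mp (by omega)
    rw [hgs0] at hgfact
    simp only [Multiset.prod_zero, mul_one] at hgfact
    have := congrArg Polynomial.natDegree hgfact
    rw [Polynomial.natDegree_C, hdeg] at this
    omega
  · have hone : Multiset.card gs = 1 := by omega
    obtain ⟨x, hx⟩ := Multiset.card_eq_one.mp hone
    have hxirr : Irreducible x := hmemIrr x (by rw [hx]; simp)
    have hgx : g = Polynomial.C (w : ℤ) * x := by
      rw [hgfact, hx, Multiset.prod_singleton]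
    have hassoc : Associated x g := by
      refine ⟨(Polynomial.isUnit_C.mpr w.isUnit).unit, ?_⟩
      rw [IsUnit.unit_spec, hgx]
      ring
    exact hassoc.irreducible hxirr
end

section
/- Let g = s_0 + s_1 z + ... + s_n z^n ∈ ℤ[z] be a primitive polynomial of degree n with s_0·s_n ≠ 0 such that |s_0| = p^k · d for some positive integers k and d and a prime p with p ∤ d. Let Δ be a positive integer with Δ ≤ n such that g has no nonconstant factor of degree less than Δ in ℤ[z], and suppose that every complex zero of g lies in the region |z| > d^{1/Δ}. Then g is a product of at most min_{0 ≤ i ≤ n} { i + v_p(s_i) } irreducible polynomials in ℤ[z]. In particular, if k = 1, or if p ∤ s_1, then g is irreducible in ℤ[z]. -/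
/-- `v_p(a)` with values in `ℕ∞`, where `v_p(0) = ∞`. -/
noncomputable def intVal (p : ℕ) (a : ℤ) : ℕ∞ :=
  if a = 0 then ⊤ else (padicValInt p a : ℕ∞)

open Polynomial

lemma auxA (p : ℤ) (S : Multiset (Polynomial ℤ))
    (hS : ∀ f ∈ S, p ∣ f.coeff 0) (i : ℕ) :
    p ^ (Multiset.card S - i) ∣ S.prod.coeff i := by
  induction S using Multiset.induction generalizing i with
  | empty => simp
  | cons f T ih =>
    rw [Multiset.prod_cons, Polynomial.coeff_mul]
    apply Finset.dvd_sum
    rintro ⟨a, b⟩ hab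
    have hab' : a + b = i := Finset.HasAntidiagonal.mem_antidiagonal.mp hab
    have hT : ∀ q ∈ T, p ∣ q.coeff 0 := fun q hq => hS q (Multiset.mem_cons_of_mem hq)
    rw [Multiset.card_cons]
    rcases Nat.eq_zero_or_pos a with ha | ha
    · subst ha
      have hb : b = i := by omega
      subst hb
      have h1 : p ∣ f.coeff 0 := hS f (Multiset.mem_cons_self f T)
      have h2 : p ^ (Multiset.card T - b) ∣ T.prod.coeff b := ih hT b
      refine dvd_trans (pow_dvd_pow p (by omega : Multiset.card T + 1 - b ≤ 1 + (Multiset.card T - b))) ?_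
      rw [pow_add, pow_one]
      exact mul_dvd_mul h1 h2
    · apply dvd_mul_of_dvd_right
      exact dvd_trans (pow_dvd_pow p (by omega : Multiset.card T + 1 - i ≤ Multiset.card T - b)) (ih hT b)

lemma auxProdLt (t : ℝ) (ht : 1 ≤ t) (s : Multiset ℝ) (hs : s ≠ 0)
    (h : ∀ x ∈ s, t < x) : t ^ (Multiset.card s) < s.prod := by
  induction s using Multiset.induction with
  | empty => exact absurd rfl hs
  | cons a s ih =>
    rw [Multiset.prod_cons, Multiset.card_cons]
    have h1 : t < a := h a (Multiset.mem_cons_self a s)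
    rcases eq_or_ne s 0 with rfl | hs'
    · simpa using h1
    · have h2 : t ^ Multiset.card s < s.prod :=
        ih hs' (fun x hx => h x (Multiset.mem_cons_of_mem hx))
      have ht0 : (0:ℝ) < t := lt_of_lt_of_le one_pos ht
      calc t ^ (Multiset.card s + 1) = t * t ^ Multiset.card s := by ring
        _ < a * s.prod := by
            apply mul_lt_mul h1 (le_of_lt h2) (pow_pos ht0 _) (by linarith)

lemma auxKey (d Δ : ℕ) (hd : 0 < d) (hΔ0 : 0 < Δ)
    (h : Polynomial ℤ) (hne : h ≠ 0) (hdΔ : Δ ≤ h.natDegree)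
    (hroots : ∀ z : ℂ, Polynomial.aeval z h = 0 →
      (d : ℝ) ^ ((1 : ℝ) / (Δ : ℝ)) < ‖z‖) :
    d < (h.coeff 0).natAbs := by
  set t : ℝ := (d : ℝ) ^ ((1 : ℝ) / (Δ : ℝ)) with htdef
  have hd1 : (1:ℝ) ≤ (d:ℝ) := by exact_mod_cast hd
  have ht1 : 1 ≤ t := by
    rw [htdef]
    calc (1:ℝ) = (1:ℝ) ^ ((1:ℝ)/(Δ:ℝ)) := (Real.one_rpow _).symm
      _ ≤ (d:ℝ) ^ ((1:ℝ)/(Δ:ℝ)) := Real.rpow_le_rpow zero_le_one hd1 (by positivity)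
  set H : Polynomial ℂ := h.map (algebraMap ℤ ℂ) with hHdef
  have hinj : Function.Injective (algebraMap ℤ ℂ) := fun a b hab => by simpa using hab
  have hH0 : H ≠ 0 := (Polynomial.map_ne_zero_iff hinj).mpr hne
  have hdegH : H.natDegree = h.natDegree := natDegree_map_eq_of_injective hinj h
  have hsplit : Splits H := IsAlgClosed.splits H
  have hcard : Multiset.card H.roots = h.natDegree := by
    rw [← hdegH]; exact (Polynomial.splits_iff_card_roots).mp hsplit
  have heq := hsplit.eq_prod_roots
  -- evaluate at 0 and take abs
  have heval : ((h.coeff 0 : ℤ) : ℂ) = H.leadingCoeff * (H.roots.map (fun a => -a)).prod := by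
    have : H.eval 0 = (C H.leadingCoeff * (Multiset.map (fun a => X - C a) H.roots).prod).eval 0 := by
      rw [← heq]
    rw [Polynomial.eval_mul, Polynomial.eval_C, Polynomial.eval_multiset_prod,
      Multiset.map_map] at this
    have h0 : H.eval 0 = ((h.coeff 0 : ℤ) : ℂ) := by
      rw [← Polynomial.coeff_zero_eq_eval_zero, hHdef, Polynomial.coeff_map]
      rfl
    rw [h0] at this
    rw [this]
    refine congrArg _ (congrArg Multiset.prod (Multiset.map_congr rfl ?_))
    intro a _
    simp
  have habs : ‖((h.coeff 0 : ℤ) : ℂ)‖ =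
      ‖H.leadingCoeff‖ * (H.roots.map (fun a => ‖a‖)).prod := by
    rw [heval, norm_mul, show ‖(Multiset.map (fun a => -a) H.roots).prod‖ = _ from map_multiset_prod (normHom : ℂ →*₀ ℝ) _, Multiset.map_map]
    congr 2
    apply Multiset.map_congr rfl
    intro a _
    simp
  -- each root has abs > t
  have hroot_big : ∀ x ∈ H.roots.map (fun a => ‖a‖), t < x := by
    intro x hx
    obtain ⟨a, ha, rfl⟩ := Multiset.mem_map.mp hx
    apply hroots a
    have h2 := (Polynomial.mem_roots'.mp ha).2
    rw [Polynomial.IsRoot, hHdef, Polynomial.eval_map] at h2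
    rw [Polynomial.aeval_def]
    exact h2
  have hprodlt : t ^ (Multiset.card (H.roots.map (fun a => ‖a‖))) <
      (H.roots.map (fun a => ‖a‖)).prod := by
    apply auxProdLt t ht1 _ _ hroot_big
    rw [Ne, Multiset.map_eq_zero, ← Multiset.card_eq_zero, hcard]
    omega
  rw [Multiset.card_map, hcard] at hprodlt
  have htpow : (d:ℝ) ≤ t ^ h.natDegree := by
    have h1 : t ^ Δ ≤ t ^ h.natDegree := pow_le_pow_right₀ ht1 hdΔ
    have h2 : t ^ Δ = (d:ℝ) := by
      rw [htdef, ← Real.rpow_natCast ((d:ℝ) ^ ((1:ℝ)/(Δ:ℝ))) Δ, ← Real.rpow_mul (by positivity)]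
      rw [one_div, inv_mul_cancel₀ (by exact_mod_cast hΔ0.ne' : (Δ:ℝ) ≠ 0), Real.rpow_one]
    linarith
  have hlc : 1 ≤ ‖H.leadingCoeff‖ := by
    have : H.leadingCoeff = ((h.leadingCoeff : ℤ) : ℂ) := by
      rw [Polynomial.leadingCoeff, hdegH, hHdef, Polynomial.coeff_map]
      rfl
    rw [this, Complex.norm_intCast]
    have : h.leadingCoeff ≠ 0 := Polynomial.leadingCoeff_ne_zero.mpr hne
    have := Int.one_le_abs this
    calc (1:ℝ) = ((1:ℤ):ℝ) := by norm_num
      _ ≤ ((|h.leadingCoeff| : ℤ) : ℝ) := by exact_mod_cast this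
      _ = |((h.leadingCoeff : ℤ) : ℝ)| := by push_cast; rfl
  have hfin : (d:ℝ) < ‖((h.coeff 0 : ℤ) : ℂ)‖ := by
    rw [habs]
    have hp0 : (0:ℝ) < (H.roots.map (fun a => ‖a‖)).prod :=
      lt_of_le_of_lt (by positivity) (lt_of_le_of_lt htpow hprodlt)
    calc (d:ℝ) < (H.roots.map (fun a => ‖a‖)).prod := lt_of_le_of_lt htpow hprodlt
      _ = 1 * (H.roots.map (fun a => ‖a‖)).prod := (one_mul _).symm
      _ ≤ ‖H.leadingCoeff‖ * (H.roots.map (fun a => ‖a‖)).prod := by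
          apply mul_le_mul_of_nonneg_right hlc (le_of_lt hp0)
  rw [Complex.norm_intCast] at hfin
  have : ((d:ℤ):ℝ) < ((|h.coeff 0| : ℤ) : ℝ) := by push_cast; linarith
  have h2 : (d:ℤ) < |h.coeff 0| := by exact_mod_cast this
  rw [Int.abs_eq_natAbs] at h2
  exact_mod_cast h2



/-- Lemma 3: let `g = s_0 + s_1 z + ⋯ + s_n z^n ∈ ℤ[z]` be primitive of degree `n`
with `s_0 s_n ≠ 0` and `|s_0| = p^k d` for positive integers `k, d` and a prime
`p ∤ d`. Let `Δ ≤ n` be a positive integer such that `g` has no nonconstant factor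
of degree less than `Δ` in `ℤ[z]`, and suppose every complex zero of `g` lies in the
region `|z| > d^{1/Δ}`. Then `g` is a product of at most
`min_{0 ≤ i ≤ n} {i + v_p(s_i)}` irreducible polynomials in `ℤ[z]` (with
`v_p(0) = ∞`); in particular, if `k = 1` or `p ∤ s_1`, then `g` is irreducible. -/
theorem statement7
    (g : Polynomial ℤ) (n : ℕ) (hdeg : g.natDegree = n)
    (hs : g.coeff 0 * g.coeff n ≠ 0) (hprim : g.IsPrimitive)
    (k d : ℕ) (hk : 0 < k) (hd : 0 < d)
    (p : ℕ) (hp : Nat.Prime p) (hpd : ¬ p ∣ d)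
    (hs0 : (g.coeff 0).natAbs = p ^ k * d)
    (Δ : ℕ) (hΔ0 : 0 < Δ) (hΔn : Δ ≤ n)
    (hΔ : ∀ h : Polynomial ℤ, h ∣ g → 0 < h.natDegree → Δ ≤ h.natDegree)
    (hzeros : ∀ z : ℂ, Polynomial.aeval z g = 0 →
      (d : ℝ) ^ ((1 : ℝ) / (Δ : ℝ)) < ‖z‖) :
    (∃ (u : ℤˣ) (gs : Multiset (Polynomial ℤ)),
      (Multiset.card gs : ℕ∞) ≤
        (Finset.range (n + 1)).inf (fun i => (i : ℕ∞) + intVal p (g.coeff i)) ∧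
      (∀ h ∈ gs, 0 < h.natDegree ∧ Irreducible h) ∧
      g = Polynomial.C (u : ℤ) * gs.prod) ∧
    ((k = 1 ∨ ¬ ((p : ℤ) ∣ g.coeff 1)) → Irreducible g) := by
  haveI : Fact (Nat.Prime p) := ⟨hp⟩
  have hg0 : g ≠ 0 := fun hg => hs (by simp [hg])
  have hc0 : g.coeff 0 ≠ 0 := left_ne_zero_of_mul hs
  set gs := UniqueFactorizationMonoid.factors g with hgs
  obtain ⟨u, hu⟩ := UniqueFactorizationMonoid.factors_prod hg0
  obtain ⟨r0, hr0u, hr0C⟩ := Polynomial.isUnit_iff.mp u.isUnit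
  have hgeq : g = Polynomial.C r0 * gs.prod := by
    rw [hr0C, ← hu, mul_comm]
  -- facts about each factor
  have hfact : ∀ q ∈ gs, 0 < q.natDegree ∧ Irreducible q ∧ (p : ℤ) ∣ q.coeff 0 := by
    intro q hq
    have hirr : Irreducible q := UniqueFactorizationMonoid.irreducible_of_factor q hq
    have hqg : q ∣ g := dvd_trans (Multiset.dvd_prod hq)
      (Dvd.intro_left _ hgeq.symm)
    have hqd : 0 < q.natDegree := by
      rcases Nat.eq_zero_or_pos q.natDegree with h0 | h0
      · exfalso
        have hqC : q = Polynomial.C (q.coeff 0) := Polynomial.eq_C_of_natDegree_eq_zero h0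
        have : IsUnit (q.coeff 0) := hprim (q.coeff 0) (hqC ▸ hqg)
        exact hirr.not_isUnit (hqC ▸ (Polynomial.isUnit_C.mpr this))
      · exact h0
    refine ⟨hqd, hirr, ?_⟩
    have hΔq : Δ ≤ q.natDegree := hΔ q hqg hqd
    have hqr : ∀ z : ℂ, Polynomial.aeval z q = 0 →
        (d : ℝ) ^ ((1 : ℝ) / (Δ : ℝ)) < ‖z‖ := by
      intro z hz
      obtain ⟨w, hw⟩ := hqg
      apply hzeros
      rw [hw, map_mul, hz, zero_mul]
    have hbig : d < (q.coeff 0).natAbs := auxKey d Δ hd hΔ0 q hirr.ne_zero hΔq hqr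
    by_contra hnp
    have hnp' : ¬ p ∣ (q.coeff 0).natAbs := fun hh => hnp (Int.natCast_dvd_natCast.mpr hh |>.trans (Int.natAbs_dvd.mpr dvd_rfl))
    have hdvd0 : q.coeff 0 ∣ g.coeff 0 := by
      obtain ⟨w, hw⟩ := hqg
      rw [hw, Polynomial.mul_coeff_zero]
      exact Dvd.intro _ rfl
    have hdvd : (q.coeff 0).natAbs ∣ p ^ k * d := by
      rw [← hs0]
      exact Int.natAbs_dvd_natAbs.mpr hdvd0
    have hcop : Nat.Coprime (q.coeff 0).natAbs (p ^ k) :=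
      Nat.Coprime.pow_right _ (((Nat.Prime.coprime_iff_not_dvd hp).mpr hnp').symm)
    have : (q.coeff 0).natAbs ∣ d := hcop.dvd_of_dvd_mul_left hdvd
    exact absurd (Nat.le_of_dvd hd this) (by omega)
  -- cardinality bound
  have hcardle : (Multiset.card gs : ℕ∞) ≤
      (Finset.range (n + 1)).inf (fun i => (i : ℕ∞) + intVal p (g.coeff i)) := by
    apply Finset.le_inf
    intro i _
    have hdvd : (p : ℤ) ^ (Multiset.card gs - i) ∣ g.coeff i := by
      rw [hgeq, Polynomial.coeff_C_mul]
      exact Dvd.dvd.mul_left (auxA (p : ℤ) gs (fun f hf => (hfact f hf).2.2) i) r0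
    by_cases hci : g.coeff i = 0
    · simp [intVal, hci]
    · rw [intVal, if_neg hci]
      have hval : Multiset.card gs - i ≤ padicValInt p (g.coeff i) := by
        rcases (padicValInt_dvd_iff (Multiset.card gs - i) (g.coeff i)).mp hdvd with h | h
        · exact absurd h hci
        · exact h
      have : Multiset.card gs ≤ i + padicValInt p (g.coeff i) := by omega
      exact_mod_cast this
  have hn1 : 1 ≤ n := le_trans hΔ0 hΔn
  constructor
  · exact ⟨hr0u.unit, gs, hcardle, fun h hh => ⟨(hfact h hh).1, (hfact h hh).2.1⟩, by
      rw [hgeq, hr0u.unit_spec]⟩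
  · intro hcase
    have hinfle : (Finset.range (n + 1)).inf (fun i => (i : ℕ∞) + intVal p (g.coeff i)) ≤ 1 := by
      rcases hcase with h1 | h1
      · subst h1
        have h0mem : 0 ∈ Finset.range (n + 1) := by simp
        refine le_trans (Finset.inf_le h0mem) ?_
        have : intVal p (g.coeff 0) = (1 : ℕ∞) := by
          rw [intVal, if_neg hc0]
          have : padicValInt p (g.coeff 0) = 1 := by
            rw [padicValInt, hs0, padicValNat.mul (pow_ne_zero _ hp.pos.ne') (by omega),
              padicValNat.prime_pow, padicValNat.eq_zero_of_not_dvd hpd]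
          rw [this]; rfl
        rw [this]
        simp
      · have h1mem : 1 ∈ Finset.range (n + 1) := by
          simp; omega
        refine le_trans (Finset.inf_le h1mem) ?_
        have hc1 : g.coeff 1 ≠ 0 := fun hh => h1 (by simp [hh])
        have : intVal p (g.coeff 1) = (0 : ℕ∞) := by
          rw [intVal, if_neg hc1, padicValInt.eq_zero_of_not_dvd h1]
          rfl
        rw [this]
        simp
    have hcard1 : Multiset.card gs ≤ 1 := by
      have := le_trans hcardle hinfle
      exact_mod_cast this
    have hcardne : Multiset.card gs ≠ 0 := by
      intro h0
      rw [Multiset.card_eq_zero] at h0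
      rw [h0, Multiset.prod_zero, mul_one] at hgeq
      have : g.natDegree = 0 := by rw [hgeq]; exact Polynomial.natDegree_C r0
      omega
    have hcard : Multiset.card gs = 1 := by omega
    obtain ⟨q, hq⟩ := Multiset.card_eq_one.mp hcard
    have hqmem : q ∈ gs := by rw [hq]; exact Multiset.mem_singleton_self q
    have hirr : Irreducible q := (hfact q hqmem).2.1
    have hassoc : Associated q g := by
      refine ⟨(Polynomial.isUnit_C.mpr hr0u).unit, ?_⟩
      rw [IsUnit.unit_spec, hgeq, hq, Multiset.prod_singleton, mul_comm]
    exact hassoc.irreducible hirr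
end

section
/- Let g = s_0 + s_1 z + ... + s_n z^n ∈ ℤ[z] be a primitive polynomial of degree n with s_0·s_n ≠ 0 such that |s_n| = p^k · d for some positive integers k and d and a prime p with p ∤ d. Let Δ be a positive integer with Δ ≤ n such that g has no nonconstant factor of degree less than Δ in ℤ[z], and suppose that every complex zero of g lies in the region |z| > d^{1/Δ}. Suppose further that |s_0| > 1 and |s_0|/q ≤ |s_n|, where q is the smallest prime divisor of |s_0|. Then g is a product of at most min_{1 ≤ i ≤ n} { k, i + v_p(s_{n−i}) } irreducible polynomials in ℤ[z]. In particular, if k = 1, or if p ∤ s_{n−1}, then g is irreducible in ℤ[z]. -/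
open Polynomial

/-- Strict product inequality for naturals over a nonempty multiset. -/
private lemma aux_prod_lt {α : Type*} (f g : α → ℕ) :
    ∀ (s : Multiset α), s ≠ 0 → (∀ a ∈ s, f a < g a) →
      (s.map f).prod < (s.map g).prod := by
  intro s
  induction s using Multiset.induction_on with
  | empty => intro h; exact absurd rfl h
  | cons a s ih =>
    intro _ hlt
    rcases eq_or_ne s 0 with rfl | hs
    · simpa using hlt a (by simp)
    · have h1 := hlt a (by simp)
      have h2 := ih hs (fun b hb => hlt b (by simp [hb]))
      simp only [Multiset.map_cons, Multiset.prod_cons]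
      exact Nat.mul_lt_mul'' h1 h2

/-- Strict product lower bound for reals. -/
private lemma aux_prod_real (c : ℝ) (hc : 1 ≤ c) :
    ∀ (s : Multiset ℝ), s ≠ 0 → (∀ x ∈ s, c < x) →
      c ^ Multiset.card s < s.prod := by
  intro s
  induction s using Multiset.induction_on with
  | empty => intro h; exact absurd rfl h
  | cons a s ih =>
    intro _ hlt
    rcases eq_or_ne s 0 with rfl | hs
    · simpa using hlt a (by simp)
    · have h1 := hlt a (by simp)
      have h2 := ih hs (fun b hb => hlt b (by simp [hb]))
      simp only [Multiset.card_cons, Multiset.prod_cons, pow_succ']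
      have hc0 : (0:ℝ) ≤ c := le_trans zero_le_one hc
      exact mul_lt_mul'' h1 h2 hc0 (pow_nonneg hc0 _)

private lemma aux_pow_dvd_prod {α : Type*} [CommMonoid α] (p : α) :
    ∀ (s : Multiset α), (∀ a ∈ s, p ∣ a) → p ^ Multiset.card s ∣ s.prod := by
  intro s
  induction s using Multiset.induction_on with
  | empty => simp
  | cons a s ih =>
    intro h
    simp only [Multiset.card_cons, Multiset.prod_cons, pow_succ']
    exact mul_dvd_mul (h a (by simp)) (ih (fun b hb => h b (by simp [hb])))

/-- Key `p`-adic coefficient bound for products of polynomials whose leading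
coefficients are all divisible by `p`. -/
private lemma aux_coeff_dvd (p : ℤ) :
    ∀ (s : Multiset (Polynomial ℤ)), (∀ h ∈ s, p ∣ h.leadingCoeff) → ∀ t : ℕ,
      p ^ (Multiset.card s - ((s.map Polynomial.natDegree).sum - t)) ∣ s.prod.coeff t := by
  intro s
  induction s using Multiset.induction_on with
  | empty =>
    intro _ t
    simp
  | cons a s ih =>
    intro h t
    have hIH := ih (fun b hb => h b (by simp [hb]))
    have ha : p ∣ a.leadingCoeff := h a (by simp)
    simp only [Multiset.map_cons, Multiset.sum_cons, Multiset.card_cons, Multiset.prod_cons]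
    rw [Polynomial.coeff_mul]
    apply Finset.dvd_sum
    rintro ⟨x, y⟩ hxy
    have hxyt : x + y = t := Finset.HasAntidiagonal.mem_antidiagonal.mp hxy
    set Da := a.natDegree with hDa
    set D' := (s.map Polynomial.natDegree).sum with hD'
    set m := Multiset.card s with hm
    rcases lt_or_ge Da x with hx | hx
    · rw [Polynomial.coeff_eq_zero_of_natDegree_lt hx, zero_mul]
      exact dvd_zero _
    rcases lt_or_ge D' y with hy | hy
    · have : s.prod.coeff y = 0 :=
        Polynomial.coeff_eq_zero_of_natDegree_lt
          (lt_of_le_of_lt (Polynomial.natDegree_multiset_prod_le s) hy)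
      rw [this, mul_zero]
      exact dvd_zero _
    rcases eq_or_lt_of_le hx with hxe | hxlt
    · have hco : p ∣ a.coeff x := by rw [hxe]; exact ha
      have he : m + 1 - (Da + D' - t) ≤ 1 + (m - (D' - y)) := by omega
      calc p ^ (m + 1 - (Da + D' - t)) ∣ p ^ (1 + (m - (D' - y))) := pow_dvd_pow _ he
        _ = p * p ^ (m - (D' - y)) := by rw [pow_add, pow_one]
        _ ∣ a.coeff x * s.prod.coeff y := mul_dvd_mul hco (hIH y)
    · have he : m + 1 - (Da + D' - t) ≤ m - (D' - y) := by omega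
      exact Dvd.dvd.mul_left ((pow_dvd_pow _ he).trans (hIH y)) _

/-- Any factor of `g` of degree at least `Δ` has a large constant coefficient. -/
private lemma aux_factor_bound (g : Polynomial ℤ) (d Δ : ℕ) (hd : 0 < d) (hΔ0 : 0 < Δ)
    (hzeros : ∀ z : ℂ, Polynomial.aeval z g = 0 →
      (d : ℝ) ^ ((1 : ℝ) / (Δ : ℝ)) < ‖z‖)
    (h : Polynomial ℤ) (hdvd : h ∣ g) (hD : Δ ≤ h.natDegree) :
    d * (h.leadingCoeff).natAbs < (h.coeff 0).natAbs := by
  have hDpos : 0 < h.natDegree := lt_of_lt_of_le hΔ0 hD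
  have hne : h ≠ 0 := fun hh => by simp [hh] at hDpos
  set c : ℝ := (d : ℝ) ^ ((1 : ℝ) / (Δ : ℝ)) with hcdef
  have hd1 : (1:ℝ) ≤ (d:ℝ) := by exact_mod_cast hd
  have hc : 1 ≤ c := Real.one_le_rpow hd1 (by positivity)
  set H : Polynomial ℂ := h.map (Int.castRingHom ℂ) with hHdef
  have hH0 : H ≠ 0 := by
    rw [hHdef, Ne, Polynomial.map_eq_zero_iff (by exact Int.cast_injective)]
    exact hne
  have hHdeg : H.natDegree = h.natDegree :=
    Polynomial.natDegree_map_eq_of_injective (by exact Int.cast_injective) h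
  have hsplit : H.Splits := IsAlgClosed.splits H
  have hcard : Multiset.card H.roots = h.natDegree := by
    rw [← hHdeg]; exact (Polynomial.splits_iff_card_roots).mp hsplit
  have hHe := hsplit.eq_prod_roots
  have h0 : H.coeff 0 = H.leadingCoeff * (H.roots.map fun a => (0:ℂ) - a).prod := by
    conv_lhs => rw [hHe]
    rw [Polynomial.coeff_zero_eq_eval_zero, Polynomial.eval_mul, Polynomial.eval_C,
      Polynomial.eval_multiset_prod, Multiset.map_map]
    simp
  have habsint : ∀ m : ℤ, ‖(m : ℂ)‖ = (m.natAbs : ℝ) := by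
    intro m
    rw [Complex.norm_intCast, Nat.cast_natAbs]
    push_cast
    rfl
  have hlead : H.leadingCoeff = (h.leadingCoeff : ℂ) :=
    Polynomial.leadingCoeff_map_of_injective (by exact Int.cast_injective) h
  have hc0 : H.coeff 0 = ((h.coeff 0 : ℤ) : ℂ) := Polynomial.coeff_map _ 0
  have hroots : ∀ a ∈ H.roots, c < ‖a‖ := by
    intro a ha
    have hroot : H.eval a = 0 := (Polynomial.isRoot_of_mem_roots ha)
    have haev : Polynomial.aeval a h = 0 := by
      rwa [Polynomial.aeval_def, ← Polynomial.eval_map]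
    obtain ⟨w, hw⟩ := hdvd
    have : Polynomial.aeval a g = 0 := by rw [hw, map_mul, haev, zero_mul]
    exact hzeros a this
  have hprodlt : c ^ h.natDegree < (H.roots.map (‖·‖)).prod := by
    have hnz : H.roots.map (‖·‖) ≠ 0 := by
      intro hcontra
      have : Multiset.card (H.roots.map (‖·‖)) = 0 := by rw [hcontra]; rfl
      rw [Multiset.card_map, hcard] at this
      omega
    have := aux_prod_real c hc (H.roots.map (‖·‖)) hnz (by
      intro x hx
      obtain ⟨a, ha, rfl⟩ := Multiset.mem_map.mp hx
      exact hroots a ha)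
    rwa [Multiset.card_map, hcard] at this
  have habs0 : ((h.coeff 0).natAbs : ℝ) =
      ((h.leadingCoeff).natAbs : ℝ) * (H.roots.map (‖·‖)).prod := by
    rw [← habsint, ← habsint, ← hlead, ← hc0, h0, norm_mul,
      show ‖(H.roots.map fun a => (0:ℂ) - a).prod‖ = ((H.roots.map fun a => (0:ℂ) - a).map (‖·‖)).prod
        from map_multiset_prod (normHom (α := ℂ)) _,
      Multiset.map_map]
    congr 2
    apply Multiset.map_congr rfl
    intro a _
    simp
  have hcΔ : c ^ Δ = (d : ℝ) := by
    rw [hcdef, ← Real.rpow_natCast ((d:ℝ) ^ ((1:ℝ)/(Δ:ℝ))) Δ,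
      ← Real.rpow_mul (by positivity), one_div,
      inv_mul_cancel₀ (by exact_mod_cast hΔ0.ne'), Real.rpow_one]
  have hlpos : (0:ℝ) < ((h.leadingCoeff).natAbs : ℝ) := by
    have h1 : h.leadingCoeff ≠ 0 := Polynomial.leadingCoeff_ne_zero.mpr hne
    have h2 : h.leadingCoeff.natAbs ≠ 0 := Int.natAbs_ne_zero.mpr h1
    positivity
  have key : (d:ℝ) * ((h.leadingCoeff).natAbs : ℝ) < ((h.coeff 0).natAbs : ℝ) := by
    rw [habs0]
    calc (d:ℝ) * ((h.leadingCoeff).natAbs : ℝ)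
        = ((h.leadingCoeff).natAbs : ℝ) * (c ^ Δ) := by rw [hcΔ]; ring
      _ ≤ ((h.leadingCoeff).natAbs : ℝ) * (c ^ h.natDegree) := by
          apply mul_le_mul_of_nonneg_left (pow_le_pow_right₀ hc hD) (le_of_lt hlpos)
      _ < _ := mul_lt_mul_of_pos_left hprodlt hlpos
  exact_mod_cast key

/-- Lemma 5: let `g = s_0 + s_1 z + ⋯ + s_n z^n ∈ ℤ[z]` be primitive of degree `n`
with `s_0 s_n ≠ 0` and `|s_n| = p^k d` for positive integers `k, d` and a prime
`p ∤ d`. Let `Δ ≤ n` be a positive integer such that `g` has no nonconstant factor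
of degree less than `Δ` in `ℤ[z]`, and suppose every complex zero of `g` lies in the
region `|z| > d^{1/Δ}`. Suppose further that `|s_0| > 1` and `|s_0|/q ≤ |s_n|`,
where `q` is the smallest prime divisor of `|s_0|`. Then `g` is a product of at most
`min_{1 ≤ i ≤ n} {k, i + v_p(s_{n-i})}` irreducible polynomials in `ℤ[z]` (with
`v_p(0) = ∞`); in particular, if `k = 1` or `p ∤ s_{n-1}`, then `g` is
irreducible. -/
theorem statement8
    (g : Polynomial ℤ) (n : ℕ) (hdeg : g.natDegree = n)
    (hs : g.coeff 0 * g.coeff n ≠ 0) (hprim : g.IsPrimitive)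
    (k d : ℕ) (hk : 0 < k) (hd : 0 < d)
    (p : ℕ) (hp : Nat.Prime p) (hpd : ¬ p ∣ d)
    (hsn : (g.coeff n).natAbs = p ^ k * d)
    (Δ : ℕ) (hΔ0 : 0 < Δ) (hΔn : Δ ≤ n)
    (hΔ : ∀ h : Polynomial ℤ, h ∣ g → 0 < h.natDegree → Δ ≤ h.natDegree)
    (hzeros : ∀ z : ℂ, Polynomial.aeval z g = 0 →
      (d : ℝ) ^ ((1 : ℝ) / (Δ : ℝ)) < ‖z‖)
    (hs0 : 1 < (g.coeff 0).natAbs)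
    (q : ℕ) (hq : Nat.Prime q) (hqdvd : q ∣ (g.coeff 0).natAbs)
    (hqmin : ∀ q', Nat.Prime q' → q' ∣ (g.coeff 0).natAbs → q ≤ q')
    (hcond : ((g.coeff 0).natAbs : ℚ) / (q : ℚ) ≤ ((g.coeff n).natAbs : ℚ)) :
    (∃ (u : ℤˣ) (gs : Multiset (Polynomial ℤ)),
      (Multiset.card gs : ℕ∞) ≤
        (Finset.Icc 1 n).inf
          (fun i => min (k : ℕ∞) ((i : ℕ∞) + intVal p (g.coeff (n - i)))) ∧
      (∀ h ∈ gs, 0 < h.natDegree ∧ Irreducible h) ∧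
      g = Polynomial.C (u : ℤ) * gs.prod) ∧
    ((k = 1 ∨ ¬ ((p : ℤ) ∣ g.coeff (n - 1))) → Irreducible g) := by
  haveI : Fact p.Prime := ⟨hp⟩
  have hg0 : g.coeff 0 ≠ 0 := fun hh => hs (by rw [hh, zero_mul])
  have hgn : g.coeff n ≠ 0 := fun hh => hs (by rw [hh, mul_zero])
  have hgne : g ≠ 0 := fun hh => hg0 (by rw [hh]; simp)
  have hn1 : 1 ≤ n := le_trans hΔ0 hΔn
  -- factorization
  set gs := UniqueFactorizationMonoid.factors g with hgsdef
  obtain ⟨w, hw⟩ := UniqueFactorizationMonoid.factors_prod hgne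
  have hwu : IsUnit (w : Polynomial ℤ) := w.isUnit
  rw [Polynomial.isUnit_iff] at hwu
  obtain ⟨r, hr, hrc⟩ := hwu
  have hgfact : g = Polynomial.C r * gs.prod := by
    rw [← hw, ← hrc]; ring
  have hmem : ∀ h ∈ gs, Irreducible h := fun h hh =>
    UniqueFactorizationMonoid.irreducible_of_factor h hh
  have hdvdg : ∀ h ∈ gs, h ∣ g := by
    intro h hh
    exact dvd_trans (Multiset.dvd_prod hh) ⟨↑w, hw.symm⟩
  have hpos : ∀ h ∈ gs, 0 < h.natDegree := by
    intro h hh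
    by_contra hc
    push_neg at hc
    have hd0 : h.natDegree = 0 := Nat.le_zero.mp hc
    have hhc := Polynomial.eq_C_of_natDegree_eq_zero hd0
    have hCd : Polynomial.C (h.coeff 0) ∣ g := hhc ▸ hdvdg h hh
    have := hprim _ hCd
    exact (hmem h hh).not_isUnit (hhc ▸ Polynomial.isUnit_C.mpr this)
  have hΔle : ∀ h ∈ gs, Δ ≤ h.natDegree := fun h hh => hΔ h (hdvdg h hh) (hpos h hh)
  have hbound : ∀ h ∈ gs, d * (h.leadingCoeff).natAbs < (h.coeff 0).natAbs :=
    fun h hh => aux_factor_bound g d Δ hd hΔ0 hzeros h (hdvdg h hh) (hΔle h hh)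
  have h0nm : (0 : Polynomial ℤ) ∉ gs := fun h0 => (hpos 0 h0).ne' (by simp)
  have hdegsum : (gs.map Polynomial.natDegree).sum = n := by
    have h1 := Polynomial.natDegree_multiset_prod gs h0nm
    have hr0 : r ≠ 0 := hr.ne_zero
    rw [← h1, ← Polynomial.natDegree_C_mul hr0 (p := gs.prod), ← hgfact, hdeg]
  have hmge1 : 1 ≤ Multiset.card gs := by
    by_contra hc
    push_neg at hc
    have : gs = 0 := Multiset.card_eq_zero.mp (by omega)
    rw [this] at hdegsum
    simp at hdegsum
    omega
  have hrabs : r.natAbs = 1 := Int.isUnit_iff.mp hr |>.elim (fun h => by simp [h])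
    (fun h => by simp [h])
  -- natAbs monoid hom
  let F : ℤ →* ℕ := ⟨⟨Int.natAbs, rfl⟩, fun a b => Int.natAbs_mul a b⟩
  have hca : (gs.map fun h => (h.coeff 0).natAbs).prod = (g.coeff 0).natAbs := by
    have h1 : g.coeff 0 = r * gs.prod.coeff 0 := by
      rw [hgfact, Polynomial.coeff_C_mul]
    have h2 : gs.prod.coeff 0 = (gs.map fun h => h.coeff 0).prod := by
      have := map_multiset_prod (Polynomial.constantCoeff (R := ℤ)) gs
      simpa [Polynomial.constantCoeff_apply, Multiset.map_map] using this
    rw [h1, Int.natAbs_mul, hrabs, one_mul, h2]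
    have := map_multiset_prod F (gs.map fun h => h.coeff 0)
    simpa [Multiset.map_map, F] using this.symm
  have hla : (gs.map fun h => (h.leadingCoeff).natAbs).prod = p ^ k * d := by
    have h1 : g.coeff n = g.leadingCoeff := by rw [← hdeg]; rfl
    have h2 : g.leadingCoeff = r * gs.prod.leadingCoeff := by
      rw [hgfact, Polynomial.leadingCoeff_mul, Polynomial.leadingCoeff_C]
    have h3 : gs.prod.leadingCoeff = (gs.map Polynomial.leadingCoeff).prod :=
      Polynomial.leadingCoeff_multiset_prod gs
    have h4 : (g.coeff n).natAbs = (gs.map fun h => (h.leadingCoeff).natAbs).prod := by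
      rw [h1, h2, Int.natAbs_mul, hrabs, one_mul, h3]
      have := map_multiset_prod F (gs.map Polynomial.leadingCoeff)
      simpa [Multiset.map_map, F] using this
    rw [← h4, hsn]
  -- `hcond` in ℕ
  have hcondN : (g.coeff 0).natAbs ≤ q * (p ^ k * d) := by
    have hq0 : (0:ℚ) < (q:ℚ) := by exact_mod_cast hq.pos
    rw [div_le_iff₀ hq0] at hcond
    have : ((g.coeff 0).natAbs : ℚ) ≤ ((q * (p ^ k * d) : ℕ) : ℚ) := by
      push_cast
      calc ((g.coeff 0).natAbs : ℚ) ≤ ((g.coeff n).natAbs : ℚ) * q := hcond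
        _ = (q:ℚ) * ((g.coeff n).natAbs : ℚ) := by ring
        _ = (q:ℚ) * ((p:ℚ) ^ k * (d:ℚ)) := by rw [hsn]; push_cast; ring
    exact_mod_cast this
  -- all leading coefficients divisible by p, provided there are ≥ 2 factors
  have plead : 2 ≤ Multiset.card gs → ∀ h ∈ gs, (p : ℤ) ∣ h.leadingCoeff := by
    intro h2 h hh
    by_contra hnd
    set la : Polynomial ℤ → ℕ := fun x => (x.leadingCoeff).natAbs with hladef
    set ca : Polynomial ℤ → ℕ := fun x => (x.coeff 0).natAbs with hcadef
    have hlaP : ¬ p ∣ la h := by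
      intro hdvd
      exact hnd (Int.dvd_natAbs.mp (by exact_mod_cast hdvd))
    have hlanez : h.leadingCoeff ≠ 0 :=
      Polynomial.leadingCoeff_ne_zero.mpr (hmem h hh).ne_zero
    have hla1 : 1 ≤ la h := Nat.one_le_iff_ne_zero.mpr (Int.natAbs_ne_zero.mpr hlanez)
    have hladvd : la h ∣ p ^ k * d := by
      rw [← hla]
      exact Multiset.dvd_prod (Multiset.mem_map_of_mem _ hh)
    have hcop : Nat.Coprime (p ^ k) (la h) :=
      Nat.Coprime.pow_left _ ((Nat.Prime.coprime_iff_not_dvd hp).mpr hlaP)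
    have hlad : la h ∣ d := Nat.Coprime.dvd_of_dvd_mul_left (Nat.Coprime.symm hcop) hladvd
    have hlaled : la h ≤ d := Nat.le_of_dvd hd hlad
    have hcalt : d * la h < ca h := hbound h hh
    have hca2 : 2 ≤ ca h := by
      have : 1 ≤ d * la h := Nat.one_le_iff_ne_zero.mpr (by positivity)
      omega
    have hcadvd : ca h ∣ (g.coeff 0).natAbs := by
      rw [← hca]
      exact Multiset.dvd_prod (Multiset.mem_map_of_mem _ hh)
    have hqca : q ≤ ca h := by
      have hmf : (ca h).minFac ∣ (g.coeff 0).natAbs := (Nat.minFac_dvd _).trans hcadvd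
      have hmfp : Nat.Prime (ca h).minFac := Nat.minFac_prime (by omega)
      exact le_trans (hqmin _ hmfp hmf) (Nat.minFac_le (by omega))
    -- erase h
    set rest := gs.erase h with hrest
    have hcons : gs = h ::ₘ rest := (Multiset.cons_erase hh).symm
    have hcardrest : Multiset.card rest = Multiset.card gs - 1 :=
      Multiset.card_erase_of_mem hh
    have hrestne : rest ≠ 0 := by
      intro hc
      rw [hc] at hcardrest
      simp at hcardrest
      omega
    set R := (rest.map la).prod with hR
    have hsplit : la h * R = p ^ k * d := by
      rw [← hla, hcons]
      simp [Multiset.map_cons, Multiset.prod_cons, hR]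
    have hcaprod : (g.coeff 0).natAbs = ca h * (rest.map ca).prod := by
      rw [← hca, hcons]
      simp [Multiset.map_cons, Multiset.prod_cons]
    have hrlt : (rest.map fun x => d * la x).prod < (rest.map ca).prod :=
      aux_prod_lt _ _ rest hrestne
        (fun x hx => hbound x (Multiset.mem_of_mem_erase hx))
    have hrprod : (rest.map fun x => d * la x).prod = d ^ Multiset.card rest * R := by
      rw [show (fun x => d * la x) = fun x => (fun _ => d) x * la x from rfl,
        Multiset.prod_map_mul]
      congr 1
      rw [Multiset.map_const', Multiset.prod_replicate]
    have hdpow : d ≤ d ^ Multiset.card rest :=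
      Nat.le_self_pow (by omega) d
    have hchain : q * (p ^ k * d) < (g.coeff 0).natAbs := by
      calc q * (p ^ k * d) = q * (la h * R) := by rw [hsplit]
        _ ≤ q * (d * R) := by
            apply Nat.mul_le_mul_left
            exact Nat.mul_le_mul_right _ hlaled
        _ ≤ q * (d ^ Multiset.card rest * R) := by
            apply Nat.mul_le_mul_left
            exact Nat.mul_le_mul_right _ hdpow
        _ = q * (rest.map fun x => d * la x).prod := by rw [hrprod]
        _ < q * (rest.map ca).prod := by
            apply Nat.mul_lt_mul_left hq.pos |>.mpr
            exact hrlt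
        _ ≤ ca h * (rest.map ca).prod := Nat.mul_le_mul_right _ hqca
        _ = (g.coeff 0).natAbs := hcaprod.symm
    omega
  -- m ≤ k
  have hmk : Multiset.card gs ≤ k := by
    rcases le_or_gt (Multiset.card gs) 1 with h1 | h2
    · omega
    · have hall := plead h2
      have hdvd1 : (p:ℕ) ^ Multiset.card gs ∣ (gs.map fun h => (h.leadingCoeff).natAbs).prod := by
        have := aux_pow_dvd_prod (p:ℕ) (gs.map fun h => (h.leadingCoeff).natAbs) (by
          intro a hamem
          obtain ⟨x, hx, rfl⟩ := Multiset.mem_map.mp hamem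
          have := hall x hx
          exact Int.natCast_dvd_natCast.mp (by
            rw [Int.dvd_natAbs]; exact_mod_cast this))
        simpa using this
      rw [hla] at hdvd1
      by_contra hc
      push_neg at hc
      have : p ^ (k+1) ∣ p ^ k * d := dvd_trans (pow_dvd_pow p (by omega)) hdvd1
      rw [pow_succ] at this
      have := (Nat.mul_dvd_mul_iff_left (Nat.pow_pos (n := k) hp.pos)).mp this
      exact hpd this
  -- m ≤ i + v_p(s_{n-i})
  have hcoeffb : ∀ i ∈ Finset.Icc 1 n,
      (Multiset.card gs : ℕ∞) ≤ (i : ℕ∞) + intVal p (g.coeff (n - i)) := by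
    intro i hi
    obtain ⟨hi1, hin⟩ := Finset.mem_Icc.mp hi
    rcases le_or_gt (Multiset.card gs) 1 with h1 | h2
    · calc (Multiset.card gs : ℕ∞) ≤ (i : ℕ∞) := by exact_mod_cast le_trans h1 hi1
        _ ≤ _ := le_self_add
    · have hall := plead h2
      have hkey := aux_coeff_dvd (p:ℤ) gs hall (n - i)
      rw [hdegsum] at hkey
      have hni : n - (n - i) = i := by omega
      rw [hni] at hkey
      have hgdvd : (p:ℤ) ^ (Multiset.card gs - i) ∣ g.coeff (n - i) := by
        rw [hgfact, Polynomial.coeff_C_mul]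
        exact Dvd.dvd.mul_left hkey r
      by_cases hz : g.coeff (n - i) = 0
      · rw [intVal, if_pos hz]
        exact le_top.trans_eq (by simp)
      · rw [intVal, if_neg hz]
        have hval : Multiset.card gs - i ≤ padicValInt p (g.coeff (n - i)) := by
          rcases (padicValInt_dvd_iff (Multiset.card gs - i) (g.coeff (n - i))).mp hgdvd with
            h | h
          · exact absurd h hz
          · exact h
        have : Multiset.card gs ≤ i + padicValInt p (g.coeff (n - i)) := by omega
        exact_mod_cast this
  refine ⟨⟨hr.unit, gs, ?_, fun h hh => ⟨hpos h hh, hmem h hh⟩, by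
      rw [hr.unit_spec]; exact hgfact⟩, ?_⟩
  · apply Finset.le_inf
    intro i hi
    exact le_min (by exact_mod_cast hmk) (hcoeffb i hi)
  · intro hcase
    have hm1 : Multiset.card gs ≤ 1 := by
      rcases hcase with hk1 | hnd
      · omega
      · have h1mem : 1 ∈ Finset.Icc 1 n := Finset.mem_Icc.mpr ⟨le_refl 1, hn1⟩
        have hb := hcoeffb 1 h1mem
        have hz : g.coeff (n - 1) ≠ 0 := fun hh => hnd (hh ▸ dvd_zero _)
        have hv0 : padicValInt p (g.coeff (n - 1)) = 0 :=
          padicValInt.eq_zero_of_not_dvd hnd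
        rw [intVal, if_neg hz, hv0] at hb
        have : (Multiset.card gs : ℕ∞) ≤ ((1 : ℕ) : ℕ∞) := by
          simpa using hb
        exact_mod_cast this
    obtain ⟨h, hgs1⟩ := Multiset.card_eq_one.mp (le_antisymm hm1 hmge1)
    have hirr : Irreducible h := hmem h (by rw [hgs1]; simp)
    have hassoc : Associated h g := by
      refine ⟨(Polynomial.isUnit_C.mpr hr).unit, ?_⟩
      rw [IsUnit.unit_spec, hgfact, hgs1, Multiset.prod_singleton, mul_comm]
    exact hassoc.irreducible hirr
end
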